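/- arXiv:1201.1581 — 3 statements merged into one kernel-verified Lean document; each statement's English description precedes it below -/
import Mathlib

section
/- Let U ⊂ R^n be open containing the closed unit ball, and let f : U → R^n be a weakly (1+ε)-quasisymmetric embedding with 0 ≤ ε ≤ 1/20 satisfying f(e_1) = e_1 and f(-e_1) = -e_1. Then for every x in the unit ball intersected with the hyperplane L = e_1^⊥, dist(f(x), L) ≤ 2.5 ε. -/
open RealInnerProductSpace


private lemma qs_abs_bound (ε a b t : ℝ) (hε0 : 0 ≤ ε) (hε : ε ≤ 1/20)
    (h0a : 0 ≤ a) (h0b : 0 ≤ b) (hab : b ^ 2 - a ^ 2 = 4 * t)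
    (hA : a ≤ (1 + ε) * b) (hB : b ≤ (1 + ε) * a)
    (hC : a ≤ 2 * (1 + ε)) (hD : b ≤ 2 * (1 + ε)) : |t| ≤ 2.5 * ε := by
  rw [abs_le]
  constructor
  · nlinarith [mul_le_mul hA hA h0a (by positivity : (0:ℝ) ≤ (1 + ε) * b),
      mul_le_mul hD hD h0b (by positivity : (0:ℝ) ≤ 2 * (1 + ε)), sq_nonneg ε,
      mul_nonneg hε0 (sq_nonneg ε)]
  · nlinarith [mul_le_mul hB hB h0b (by positivity : (0:ℝ) ≤ (1 + ε) * a),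
      mul_le_mul hC hC h0a (by positivity : (0:ℝ) ≤ 2 * (1 + ε)), sq_nonneg ε,
      mul_nonneg hε0 (sq_nonneg ε)]

/-- If `f` is a weakly `(1+ε)`-quasisymmetric embedding, `0 ≤ ε ≤ 1/20`, on an open set
containing the closed unit ball, fixing `±e₁`, then points of the unit ball on the
hyperplane `L = e₁ᗮ` are mapped within distance `2.5ε` of `L`. -/
theorem image_of_hyperplane_close {n : ℕ} (hn : 0 < n)
    (U : Set (EuclideanSpace ℝ (Fin n))) (hU : IsOpen U)
    (hball : Metric.closedBall (0 : EuclideanSpace ℝ (Fin n)) 1 ⊆ U)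
    (f : EuclideanSpace ℝ (Fin n) → EuclideanSpace ℝ (Fin n))
    (hemb : Topology.IsEmbedding (fun x : U => f x))
    (ε : ℝ) (hε0 : 0 ≤ ε) (hε : ε ≤ 1/20)
    (e₁ : EuclideanSpace ℝ (Fin n)) (he₁ : e₁ = EuclideanSpace.single ⟨0, hn⟩ 1)
    (hqs : ∀ a ∈ U, ∀ b ∈ U, ∀ c ∈ U,
      dist a b ≤ dist a c → dist (f a) (f b) ≤ (1 + ε) * dist (f a) (f c))
    (hf1 : f e₁ = e₁) (hf2 : f (-e₁) = -e₁) :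
    ∀ x ∈ Metric.ball (0 : EuclideanSpace ℝ (Fin n)) 1, ⟪x, e₁⟫ = 0 →
      Metric.infDist (f x) {y : EuclideanSpace ℝ (Fin n) | ⟪y, e₁⟫ = 0} ≤ 2.5 * ε := by
  intro x hx hxe
  have he : ‖e₁‖ = 1 := by rw [he₁, EuclideanSpace.norm_single]; norm_num
  have hxn : ‖x‖ < 1 := by simpa using hx
  have hxn0 : 0 ≤ ‖x‖ := norm_nonneg _
  have hxU : x ∈ U := hball (by simpa [Metric.mem_closedBall] using hxn.le)
  have h1U : e₁ ∈ U := hball (by simp [Metric.mem_closedBall, he])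
  have h2U : (-e₁) ∈ U := hball (by simp [Metric.mem_closedBall, he])
  set t := ⟪f x, e₁⟫ with ht
  -- squared distances from x to ±e₁
  have hxd1 : dist x e₁ ^ 2 = ‖x‖ ^ 2 + 1 := by
    rw [dist_eq_norm, @norm_sub_sq_real, hxe, he]; ring
  have hxd2 : dist x (-e₁) ^ 2 = ‖x‖ ^ 2 + 1 := by
    rw [dist_eq_norm, sub_neg_eq_add, @norm_add_sq_real, hxe, he]; ring
  have hee : dist e₁ (-e₁) = 2 := by
    rw [dist_eq_norm, sub_neg_eq_add, ← two_smul ℝ, norm_smul, he]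
    norm_num
  have hdx1 : dist x e₁ ≤ dist x (-e₁) := by
    nlinarith [dist_nonneg (x := x) (y := e₁), dist_nonneg (x := x) (y := -e₁)]
  have hdx2 : dist x (-e₁) ≤ dist x e₁ := by
    nlinarith [dist_nonneg (x := x) (y := e₁), dist_nonneg (x := x) (y := -e₁)]
  have hd1e : dist e₁ x ≤ dist e₁ (-e₁) := by
    rw [dist_comm e₁ x, hee]
    nlinarith [dist_nonneg (x := x) (y := e₁)]
  have hd2e : dist (-e₁) x ≤ dist (-e₁) e₁ := by
    rw [dist_comm (-e₁) x, dist_comm (-e₁) e₁, hee]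
    nlinarith [dist_nonneg (x := x) (y := -e₁)]
  -- quasisymmetry applications
  have hA : dist (f x) e₁ ≤ (1 + ε) * dist (f x) (-e₁) := by
    have := hqs x hxU e₁ h1U (-e₁) h2U hdx1
    rwa [hf1, hf2] at this
  have hB : dist (f x) (-e₁) ≤ (1 + ε) * dist (f x) e₁ := by
    have := hqs x hxU (-e₁) h2U e₁ h1U hdx2
    rwa [hf1, hf2] at this
  have hC : dist (f x) e₁ ≤ 2 * (1 + ε) := by
    have := hqs e₁ h1U x hxU (-e₁) h2U hd1e
    rw [hf1, hf2] at this
    rw [dist_comm]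
    calc dist e₁ (f x) ≤ (1 + ε) * dist e₁ (-e₁) := this
    _ = 2 * (1 + ε) := by rw [hee]; ring
  have hD : dist (f x) (-e₁) ≤ 2 * (1 + ε) := by
    have := hqs (-e₁) h2U x hxU e₁ h1U hd2e
    rw [hf1, hf2] at this
    rw [dist_comm]
    calc dist (-e₁) (f x) ≤ (1 + ε) * dist (-e₁) e₁ := this
    _ = 2 * (1 + ε) := by rw [dist_comm, hee]; ring
  have ha2 : dist (f x) e₁ ^ 2 = ‖f x‖ ^ 2 - 2 * t + 1 := by
    rw [dist_eq_norm, @norm_sub_sq_real, he, ← ht]; ring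
  have hb2 : dist (f x) (-e₁) ^ 2 = ‖f x‖ ^ 2 + 2 * t + 1 := by
    rw [dist_eq_norm, sub_neg_eq_add, @norm_add_sq_real, he, ← ht]; ring
  have h0a : 0 ≤ dist (f x) e₁ := dist_nonneg
  have h0b : 0 ≤ dist (f x) (-e₁) := dist_nonneg
  have htabs : |t| ≤ 2.5 * ε :=
    qs_abs_bound ε (dist (f x) e₁) (dist (f x) (-e₁)) t hε0 hε h0a h0b
      (by rw [ha2, hb2]; ring) hA hB hC hD
  -- project f x onto the hyperplane
  have hmem : f x - t • e₁ ∈ {y : EuclideanSpace ℝ (Fin n) | ⟪y, e₁⟫ = 0} := by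
    simp only [Set.mem_setOf_eq, inner_sub_left, real_inner_smul_left,
      real_inner_self_eq_norm_sq, he, ← ht]
    ring
  calc Metric.infDist (f x) {y : EuclideanSpace ℝ (Fin n) | ⟪y, e₁⟫ = 0}
      ≤ dist (f x) (f x - t • e₁) := Metric.infDist_le_dist_of_mem hmem
    _ = |t| := by rw [dist_eq_norm, sub_sub_cancel, norm_smul, he, Real.norm_eq_abs, mul_one]
    _ ≤ 2.5 * ε := htabs
end

section
/- Let U ⊂ R^n be open containing the closed unit ball, and let f : U → R^n be a weakly (1+ε)-quasisymmetric embedding, 0 ≤ ε ≤ 1/20, with f(e_1) = e_1 and f(-e_1) = -e_1. Then for every z with |z| = 1, |f(z) - f(0)| ≥ 5/6. -/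
open RealInnerProductSpace

/-- If `f` is a weakly `(1+ε)`-quasisymmetric embedding, `0 ≤ ε ≤ 1/20`, on an open set
containing the closed unit ball, fixing `±e₁`, then `|f z - f 0| ≥ 5/6` for every `|z| = 1`. -/
theorem image_of_sphere_far_from_center {n : ℕ} (hn : 0 < n)
    (U : Set (EuclideanSpace ℝ (Fin n))) (hU : IsOpen U)
    (hball : Metric.closedBall (0 : EuclideanSpace ℝ (Fin n)) 1 ⊆ U)
    (f : EuclideanSpace ℝ (Fin n) → EuclideanSpace ℝ (Fin n))
    (hemb : Topology.IsEmbedding (fun x : U => f x))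
    (ε : ℝ) (hε0 : 0 ≤ ε) (hε : ε ≤ 1/20)
    (e₁ : EuclideanSpace ℝ (Fin n)) (he₁ : e₁ = EuclideanSpace.single ⟨0, hn⟩ 1)
    (hqs : ∀ a ∈ U, ∀ b ∈ U, ∀ c ∈ U,
      dist a b ≤ dist a c → dist (f a) (f b) ≤ (1 + ε) * dist (f a) (f c))
    (hf1 : f e₁ = e₁) (hf2 : f (-e₁) = -e₁) :
    ∀ z : EuclideanSpace ℝ (Fin n), ‖z‖ = 1 → 5/6 ≤ dist (f z) (f 0) := by
  intro z hz
  have hne : ‖e₁‖ = 1 := by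
    rw [he₁]; simp [EuclideanSpace.norm_single]
  have h0U : (0 : EuclideanSpace ℝ (Fin n)) ∈ U := hball (by simp)
  have he1U : e₁ ∈ U := hball (by simp [Metric.mem_closedBall, dist_zero_right, hne])
  have hne1U : -e₁ ∈ U := hball (by simp [Metric.mem_closedBall, dist_zero_right, hne])
  have hzU : z ∈ U := hball (by simp [Metric.mem_closedBall, dist_zero_right, hz])
  have hd0e : dist (0 : EuclideanSpace ℝ (Fin n)) e₁ = 1 := by
    rw [dist_comm, dist_zero_right, hne]
  have hd0ne : dist (0 : EuclideanSpace ℝ (Fin n)) (-e₁) = 1 := by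
    rw [dist_comm, dist_zero_right, norm_neg, hne]
  have hd0z : dist (0 : EuclideanSpace ℝ (Fin n)) z = 1 := by
    rw [dist_comm, dist_zero_right, hz]
  -- one of dist (f 0) e₁, dist (f 0) (-e₁) is ≥ 1
  have htri : (2 : ℝ) ≤ dist (f 0) e₁ + dist (f 0) (-e₁) := by
    have h2 : dist e₁ (-e₁) = 2 := by
      rw [dist_eq_norm]
      have : e₁ - -e₁ = (2 : ℝ) • e₁ := by module
      rw [this, norm_smul, hne]; norm_num
    calc (2 : ℝ) = dist e₁ (-e₁) := h2.symm
      _ ≤ dist e₁ (f 0) + dist (f 0) (-e₁) := dist_triangle _ _ _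
      _ = dist (f 0) e₁ + dist (f 0) (-e₁) := by rw [dist_comm e₁]
  have key : (1 : ℝ) ≤ (1 + ε) * dist (f 0) (f z) := by
    rcases le_total 1 (dist (f 0) e₁) with h | h
    · have := hqs 0 h0U e₁ he1U z hzU (by rw [hd0e, hd0z])
      rw [hf1] at this
      linarith
    · have h' : (1 : ℝ) ≤ dist (f 0) (-e₁) := by linarith
      have := hqs 0 h0U (-e₁) hne1U z hzU (by rw [hd0ne, hd0z])
      rw [hf2] at this
      linarith
  have hpos : (0 : ℝ) < 1 + ε := by linarith
  have : (20 : ℝ) / 21 ≤ dist (f 0) (f z) := by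
    nlinarith [key, dist_nonneg (x := f 0) (y := f z)]
  rw [dist_comm]
  linarith
end

section
/- If M : (0,1) → (0, 1/3] is increasing with M(t) → 0 as t → 0+ and ∫_0^1 (M(t) log(1/M(t)))^2 dt/t < ∞, then for any constant c > 1, setting φ(t) = t (M(t)/c)^{c/M(t)}, the integral ∫_0^{t_0} (M(t) log(1/M(t)))^2 (φ'(t)/φ(t)) dt is finite for t_0 small enough that φ is increasing on (0, t_0], assuming M is C^1. -/
open MeasureTheory Set
open Filter

noncomputable def Kaux (c u : ℝ) : ℝ := c * (Real.log u)^2 * (1 + Real.log c - Real.log u)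

noncomputable def Haux (c u : ℝ) : ℝ :=
  c * (u * ((1 + Real.log c) * ((Real.log u)^2 - 2*Real.log u + 2) +
    (-(Real.log u)^3 + 3*(Real.log u)^2 - 6*Real.log u + 6)))

lemma Haux_hasDerivAt (c : ℝ) {u : ℝ} (hu : 0 < u) :
    HasDerivAt (Haux c) (Kaux c u) u := by
  have hl : HasDerivAt Real.log u⁻¹ u := Real.hasDerivAt_log hu.ne'
  have h2 : HasDerivAt (fun v => (Real.log v)^2) (2 * Real.log u ^ 1 * u⁻¹) u := hl.pow 2
  have h3 : HasDerivAt (fun v => (Real.log v)^3) (3 * Real.log u ^ 2 * u⁻¹) u := hl.pow 3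
  have hP : HasDerivAt (fun v => (1 + Real.log c) * ((Real.log v)^2 - 2*Real.log v + 2) +
      (-(Real.log v)^3 + 3*(Real.log v)^2 - 6*Real.log v + 6))
      ((1 + Real.log c) * (2 * Real.log u ^ 1 * u⁻¹ - 2 * u⁻¹) +
        (-(3 * Real.log u ^ 2 * u⁻¹) + 3 * (2 * Real.log u ^ 1 * u⁻¹) - 6 * u⁻¹)) u := by
    exact (((h2.sub (hl.const_mul 2)).add_const 2).const_mul (1 + Real.log c)).add
      (((h3.neg.add ((h2.const_mul 3))).sub (hl.const_mul 6)).add_const 6)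
  have h := ((hasDerivAt_id u).mul hP).const_mul c
  have heq : Haux c = fun v => c * (v * ((1 + Real.log c) * ((Real.log v)^2 - 2*Real.log v + 2) +
      (-(Real.log v)^3 + 3*(Real.log v)^2 - 6*Real.log v + 6))) := rfl
  rw [heq]
  refine h.congr_deriv ?_
  simp only [Kaux, id_eq]
  field_simp
  ring

lemma mul_log_pow_tendsto (k : ℕ) :
    Tendsto (fun u : ℝ => u * (Real.log u)^k) (nhdsWithin 0 (Ioi 0)) (nhds 0) := by
  have h1 : Tendsto (fun u : ℝ => -Real.log u) (nhdsWithin 0 (Ioi 0)) atTop :=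
    tendsto_neg_atBot_atTop.comp Real.tendsto_log_nhdsGT_zero
  have h2 := (Real.tendsto_pow_mul_exp_neg_atTop_nhds_zero k).comp h1
  have h3 := h2.const_mul ((-1 : ℝ)^k)
  rw [mul_zero] at h3
  refine h3.congr' ?_
  filter_upwards [self_mem_nhdsWithin] with u (hu : (0:ℝ) < u)
  have h : Real.exp (-(-Real.log u)) = u := by rw [neg_neg, Real.exp_log hu]
  simp only [Function.comp]
  rw [h, ← mul_assoc, ← mul_pow, neg_one_mul, neg_neg, mul_comm]

lemma Haux_tendsto (c : ℝ) :
    Tendsto (fun u : ℝ => Haux c u) (nhdsWithin 0 (Ioi 0)) (nhds 0) := by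
  have h0 := (mul_log_pow_tendsto 0).const_mul (2*c*(1+Real.log c) + 6*c)
  have h1 := (mul_log_pow_tendsto 1).const_mul (-2*c*(1+Real.log c) - 6*c)
  have h2 := (mul_log_pow_tendsto 2).const_mul (c*(1+Real.log c) + 3*c)
  have h3 := (mul_log_pow_tendsto 3).const_mul (-c)
  have h := ((h3.add h2).add h1).add h0
  simp only [mul_zero, add_zero] at h
  refine h.congr fun u => ?_
  simp only [Haux, pow_zero, pow_one]
  ring

lemma deriv_nonneg_of_monotoneOn {M : ℝ → ℝ} (hmono : MonotoneOn M (Ioo (0:ℝ) 1))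
    {x : ℝ} (hx : x ∈ Ioo (0:ℝ) 1) (hd : DifferentiableAt ℝ M x) : 0 ≤ deriv M x := by
  have h := hasDerivAt_iff_tendsto_slope.1 hd.hasDerivAt
  refine ge_of_tendsto h ?_
  filter_upwards [self_mem_nhdsWithin,
    mem_nhdsWithin_of_mem_nhds (isOpen_Ioo.mem_nhds hx)] with y hy hyI
  have hyx : y ≠ x := hy
  rw [slope_def_field]
  rcases lt_or_gt_of_ne hyx with h1 | h1
  · rw [div_nonneg_iff]
    right
    constructor
    · simpa using hmono hyI hx h1.le
    · simpa using h1.le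
  · apply div_nonneg
    · simpa using hmono hx hyI h1.le
    · simpa using h1.le

/-- If `M : (0,1) → (0,1/3]` is a `C¹` increasing majorant tending to `0` at `0⁺`
with `∫₀¹ (M(t) log(1/M(t)))² dt/t < ∞`, and `φ(t) = t (M(t)/c)^{c/M(t)}` for `c > 1`,
then `∫₀^{t₀} (M(t) log(1/M(t)))² (φ'(t)/φ(t)) dt < ∞` for `t₀` with `φ` increasing on
`(0,t₀]`. -/
theorem dini_change_of_variables (M : ℝ → ℝ) (c : ℝ) (hc : 1 < c)
    (hM : ∀ t ∈ Ioo (0:ℝ) 1, 0 < M t ∧ M t ≤ 1/3)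
    (hmono : MonotoneOn M (Ioo (0:ℝ) 1))
    (hdiff : ∀ t ∈ Ioo (0:ℝ) 1, DifferentiableAt ℝ M t)
    (hderivCont : ContinuousOn (deriv M) (Ioo (0:ℝ) 1))
    (hlim : Filter.Tendsto M (nhdsWithin 0 (Ioi 0)) (nhds 0))
    (hint : IntegrableOn (fun t => (M t * Real.log (1/M t))^2 / t) (Ioo (0:ℝ) 1) volume)
    (φ : ℝ → ℝ) (hφ : ∀ t, φ t = t * (M t / c) ^ (c / M t))
    (t₀ : ℝ) (ht₀ : 0 < t₀) (ht₀1 : t₀ < 1)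
    (hφmono : MonotoneOn φ (Ioc 0 t₀)) :
    IntegrableOn (fun t => (M t * Real.log (1/M t))^2 * (deriv φ t / φ t))
      (Ioc 0 t₀) volume := by
  have hc0 : (0:ℝ) < c := lt_trans one_pos hc
  have hsub : Ioc 0 t₀ ⊆ Ioo (0:ℝ) 1 := fun x hx => ⟨hx.1, lt_of_le_of_lt hx.2 ht₀1⟩
  set G : ℝ → ℝ := fun t => if t ≤ 0 then 0 else Haux c (M t) with hGdef
  have hGeq : ∀ {x : ℝ}, 0 < x → G =ᶠ[nhds x] fun t => Haux c (M t) := by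
    intro x hx
    filter_upwards [isOpen_Ioi.mem_nhds hx] with t (ht : (0:ℝ) < t)
    simp [hGdef, not_le.2 ht]
  have hF2 : IntegrableOn (fun t => Kaux c (M t) * deriv M t) (Ioc 0 t₀) volume := by
    apply intervalIntegral.integrableOn_deriv_of_nonneg (g := G)
    · intro x hx
      rcases eq_or_lt_of_le hx.1 with h0 | h0
      · rw [← h0]
        have h1 : Tendsto M (nhdsWithin 0 (Ioi 0)) (nhdsWithin 0 (Ioi 0)) := by
          rw [tendsto_nhdsWithin_iff]
          refine ⟨hlim, ?_⟩
          filter_upwards [Ioo_mem_nhdsGT_of_mem ⟨le_refl (0:ℝ), one_pos⟩] with t ht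
          exact (hM t ht).1
        have h2 : Tendsto G (nhdsWithin 0 (Ioi 0)) (nhds 0) := by
          refine ((Haux_tendsto c).comp h1).congr' ?_
          filter_upwards [self_mem_nhdsWithin] with t (ht : (0:ℝ) < t)
          simp [hGdef, not_le.2 ht]
        have hG0 : G 0 = 0 := by simp [hGdef]
        have hss : Icc (0:ℝ) t₀ ⊆ insert 0 (Ioi 0) := by
          intro y hy
          rcases eq_or_lt_of_le hy.1 with h | h
          · exact Or.inl h.symm
          · exact Or.inr h
        unfold ContinuousWithinAt
        rw [hG0]
        refine Tendsto.mono_left ?_ (nhdsWithin_mono 0 hss)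
        rw [nhdsWithin_insert, Filter.tendsto_sup]
        exact ⟨by simpa [hG0] using tendsto_pure_nhds G 0, h2⟩
      · have hx1 : x ∈ Ioo (0:ℝ) 1 := ⟨h0, lt_of_le_of_lt hx.2 ht₀1⟩
        have hMx : 0 < M x := (hM x hx1).1
        have hca : ContinuousAt (fun t => Haux c (M t)) x :=
          (Haux_hasDerivAt c hMx).continuousAt.comp (hdiff x hx1).continuousAt
        exact (hca.congr (hGeq h0).symm).continuousWithinAt
    · intro x hx
      have hx1 : x ∈ Ioo (0:ℝ) 1 := ⟨hx.1, lt_trans hx.2 (lt_of_le_of_lt le_rfl ht₀1)⟩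
      have hMx : 0 < M x := (hM x hx1).1
      have hcomp : HasDerivAt (fun t => Haux c (M t)) (Kaux c (M x) * deriv M x) x :=
        (Haux_hasDerivAt c hMx).comp x (hdiff x hx1).hasDerivAt
      exact hcomp.congr_of_eventuallyEq (hGeq hx.1)
    · intro x hx
      have hx1 : x ∈ Ioo (0:ℝ) 1 := ⟨hx.1, lt_trans hx.2 (lt_of_le_of_lt le_rfl ht₀1)⟩
      obtain ⟨hMx, hMx3⟩ := hM x hx1
      have hlogM : Real.log (M x) < 0 := Real.log_neg hMx (by linarith)
      have hlogc : 0 < Real.log c := Real.log_pos hc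
      have hK : 0 ≤ Kaux c (M x) :=
        mul_nonneg (mul_nonneg hc0.le (sq_nonneg _)) (by linarith)
      exact mul_nonneg hK (deriv_nonneg_of_monotoneOn hmono hx1 (hdiff x hx1))
  have hF1 : IntegrableOn (fun t => (M t * Real.log (1/M t))^2 / t) (Ioc 0 t₀) volume :=
    hint.mono_set hsub
  refine MeasureTheory.IntegrableOn.congr_fun (hF1.add hF2) ?_ measurableSet_Ioc
  intro t ht
  have ht0 : 0 < t := ht.1
  have ht1 : t ∈ Ioo (0:ℝ) 1 := hsub ht
  obtain ⟨hu, hu3⟩ := hM t ht1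
  have hMd : HasDerivAt M (deriv M t) t := (hdiff t ht1).hasDerivAt
  have huc : (0:ℝ) < M t / c := div_pos hu hc0
  have h2 : HasDerivAt (fun s => Real.log (M s / c)) ((deriv M t / c) / (M t / c)) t :=
    (hMd.div_const c).log (ne_of_gt huc)
  have hdiv : HasDerivAt (fun s => c / M s) ((0 * M t - c * deriv M t) / (M t)^2) t :=
    (hasDerivAt_const t c).div hMd (ne_of_gt hu)
  have h7 := (hasDerivAt_id' (x := t)).mul (h2.mul hdiv).exp
  have hev : ∀ᶠ s in nhds t, 0 < M s :=
    hMd.continuousAt.preimage_mem_nhds (Ioi_mem_nhds hu)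
  have heq : φ =ᶠ[nhds t]
      fun s => s * Real.exp (Real.log (M s / c) * (c / M s)) := by
    filter_upwards [hev] with s hs
    rw [hφ s, Real.rpow_def_of_pos (div_pos hs hc0)]
  have hφd := h7.congr_of_eventuallyEq heq
  have hφt : φ t = t * Real.exp (Real.log (M t / c) * (c / M t)) := by
    rw [hφ t, Real.rpow_def_of_pos huc]
  have hE : Real.exp (Real.log (M t / c) * (c / M t)) ≠ 0 := Real.exp_ne_zero _
  have hlogu : Real.log (1 / M t) = -Real.log (M t) := by rw [one_div, Real.log_inv]
  have hlogd : Real.log (M t / c) = Real.log (M t) - Real.log c :=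
    Real.log_div (ne_of_gt hu) (ne_of_gt hc0)
  simp only
  simp only [Pi.mul_apply] at hφd
  rw [hφd.deriv, hφt, hlogd]
  simp only [Kaux, one_div, Real.log_inv, Pi.add_apply]
  field_simp [Real.log_inv]
  ring
end
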